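/- Let x be a real number. Then the sequences of right convergents (R_n(ιx))_{n≥0} and of left convergents (L_n(ιx))_{n≥0} of the subtraction continued fraction of x both converge to x. -/

import Mathlib

/-- The remnants r_n(x): r_0(x) = x and r_{k+1}(x) = 1/((⌊r_k(x)⌋ + 1) − r_k(x)). -/
noncomputable def rem (x : ℝ) : ℕ → ℝ
  | 0 => x
  | k + 1 => 1 / (((⌊rem x k⌋ : ℝ) + 1) - rem x k)

/-- The subtraction continued fraction ιx: (ιx)_k = ⌊r_k(x)⌋ + 1, the unique
integer m with 0 < m − r_k(x) ≤ 1. -/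
noncomputable def iota (x : ℝ) (k : ℕ) : ℤ := ⌊rem x k⌋ + 1

/-- The 2×2 integer matrix V(m) = ((m, -1), (1, 0)). -/
def V (m : ℤ) : Matrix (Fin 2) (Fin 2) ℤ := !![m, -1; 1, 0]

/-- The matrix g_{n,s} = V(s 0) · V(s 1) ··· V(s n). -/
def gMat (s : ℕ → ℤ) (n : ℕ) : Matrix (Fin 2) (Fin 2) ℤ :=
  ((List.range (n + 1)).map fun i => V (s i)).prod

/-- The n-th right convergent R_n(s) = a_{n,s} / c_{n,s} as a real number. -/
noncomputable def R (s : ℕ → ℤ) (n : ℕ) : ℝ :=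
  (gMat s n 0 0 : ℝ) / (gMat s n 1 0 : ℝ)

/-- The n-th left convergent L_n(s) = (a_{n,s}+b_{n,s})/(c_{n,s}+d_{n,s}) as a real number. -/
noncomputable def L (s : ℕ → ℤ) (n : ℕ) : ℝ :=
  ((gMat s n 0 0 : ℝ) + (gMat s n 0 1 : ℝ)) / ((gMat s n 1 0 : ℝ) + (gMat s n 1 1 : ℝ))

/-- The n-th accuracy A_n(s) = (c_{n,s}+d_{n,s})·c_{n,s}, an integer. -/
def A (s : ℕ → ℤ) (n : ℕ) : ℤ :=
  (gMat s n 1 0 + gMat s n 1 1) * gMat s n 1 0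

lemma gMat_zero (s : ℕ → ℤ) : gMat s 0 = V (s 0) := by
  simp [gMat, List.range_succ]

lemma gMat_succ (s : ℕ → ℤ) (n : ℕ) : gMat s (n + 1) = gMat s n * V (s (n + 1)) := by
  unfold gMat
  rw [List.range_succ, List.map_append, List.prod_append]
  simp

lemma mul_V_c0 (M : Matrix (Fin 2) (Fin 2) ℤ) (m : ℤ) (i : Fin 2) :
    (M * V m) i 0 = M i 0 * m + M i 1 := by
  simp [V, Matrix.mul_apply, Fin.sum_univ_two]

lemma mul_V_c1 (M : Matrix (Fin 2) (Fin 2) ℤ) (m : ℤ) (i : Fin 2) :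
    (M * V m) i 1 = -(M i 0) := by
  simp [V, Matrix.mul_apply, Fin.sum_univ_two]

lemma gMat_det (s : ℕ → ℤ) (n : ℕ) : (gMat s n).det = 1 := by
  induction n with
  | zero => simp [gMat_zero, V, Matrix.det_fin_two_of]
  | succ n ih => rw [gMat_succ, Matrix.det_mul, ih]; simp [V, Matrix.det_fin_two_of]

lemma rem_denom_pos (x : ℝ) (k : ℕ) : 0 < ((⌊rem x k⌋ : ℝ) + 1) - rem x k := by
  have := Int.lt_floor_add_one (rem x k); linarith

lemma rem_denom_le_one (x : ℝ) (k : ℕ) : ((⌊rem x k⌋ : ℝ) + 1) - rem x k ≤ 1 := by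
  have := Int.floor_le (rem x k); linarith

lemma one_le_rem (x : ℝ) (k : ℕ) : 1 ≤ rem x (k + 1) := by
  rw [rem]
  exact one_le_one_div (rem_denom_pos x k) (rem_denom_le_one x k)

lemma two_le_iota (x : ℝ) (k : ℕ) : 2 ≤ iota x (k + 1) := by
  have h := one_le_rem x k
  have : (1 : ℤ) ≤ ⌊rem x (k + 1)⌋ := by
    exact_mod_cast Int.le_floor.mpr (by exact_mod_cast h)
  unfold iota; omega

lemma rem_rel (x : ℝ) (k : ℕ) :
    rem x k * rem x (k + 1) = (iota x k : ℝ) * rem x (k + 1) - 1 := by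
  have hp := rem_denom_pos x k
  have : rem x (k + 1) = 1 / (((⌊rem x k⌋ : ℝ) + 1) - rem x k) := by rw [rem]
  rw [this]
  unfold iota
  push_cast
  field_simp
  ring

lemma growth (x : ℝ) (n : ℕ) :
    1 ≤ gMat (iota x) n 1 0 + gMat (iota x) n 1 1 ∧ (n : ℤ) + 1 ≤ gMat (iota x) n 1 0 := by
  induction n with
  | zero => simp [gMat_zero, V]
  | succ n ih =>
    obtain ⟨h1, h2⟩ := ih
    rw [gMat_succ, mul_V_c0, mul_V_c1]
    have hm := two_le_iota x n
    constructor
    · nlinarith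
    · push_cast; nlinarith

lemma key_identity (x : ℝ) (n : ℕ) :
    x * ((gMat (iota x) n 1 0 : ℝ) * rem x (n + 1) + (gMat (iota x) n 1 1 : ℝ)) =
    (gMat (iota x) n 0 0 : ℝ) * rem x (n + 1) + (gMat (iota x) n 0 1 : ℝ) := by
  induction n with
  | zero =>
    have hx : rem x 0 = x := rfl
    have hrel := rem_rel x 0
    rw [hx] at hrel
    rw [gMat_zero]
    show x * ((((1:ℤ)):ℝ) * rem x 1 + (((0:ℤ)):ℝ)) = ((iota x 0 : ℤ):ℝ) * rem x 1 + (((-1:ℤ)):ℝ)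
    push_cast
    linear_combination hrel
  | succ n ih =>
    have hrel := rem_rel x (n + 1)
    rw [gMat_succ, mul_V_c0, mul_V_c1, mul_V_c0, mul_V_c1]
    push_cast
    set a := (gMat (iota x) n 0 0 : ℝ)
    set b := (gMat (iota x) n 0 1 : ℝ)
    set c := (gMat (iota x) n 1 0 : ℝ)
    set d := (gMat (iota x) n 1 1 : ℝ)
    linear_combination rem x (n + 2) * ih - (x * c - a) * hrel

/-- For any real x, the sequences of right and left convergents of
the subtraction continued fraction of x both converge to x. -/
theorem stmt_13 (x : ℝ) :
    Filter.Tendsto (fun n : ℕ => R (iota x) n) Filter.atTop (nhds x) ∧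
    Filter.Tendsto (fun n : ℕ => L (iota x) n) Filter.atTop (nhds x) := by
  have key : ∀ n : ℕ,
      (x ≤ R (iota x) n ∧ R (iota x) n ≤ x + 1 / ((n : ℝ) + 1)) ∧
      (x - 1 / ((n : ℝ) + 1) ≤ L (iota x) n ∧ L (iota x) n ≤ x) := by
    intro n
    have hnp1 : (0 : ℝ) < (n : ℝ) + 1 := by positivity
    set a := (gMat (iota x) n 0 0 : ℝ) with ha
    set b := (gMat (iota x) n 0 1 : ℝ) with hb
    set c := (gMat (iota x) n 1 0 : ℝ) with hc'
    set d := (gMat (iota x) n 1 1 : ℝ) with hd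
    set r := rem x (n + 1) with hrdef
    have hr : 1 ≤ r := one_le_rem x n
    obtain ⟨hcd, hcn⟩ := growth x n
    have hcdR : (1 : ℝ) ≤ c + d := by rw [hc', hd]; exact_mod_cast hcd
    have hcR : (n : ℝ) + 1 ≤ c := by rw [hc']; exact_mod_cast hcn
    have hc0 : (0 : ℝ) < c := lt_of_lt_of_le hnp1 hcR
    have hdet : a * d - b * c = 1 := by
      have h := gMat_det (iota x) n
      rw [Matrix.det_fin_two] at h
      rw [ha, hb, hc', hd]
      exact_mod_cast h
    have hkey := key_identity x n
    have hden : (1 : ℝ) ≤ c * r + d := by nlinarith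
    have hden0 : (0 : ℝ) < c * r + d := lt_of_lt_of_le one_pos hden
    -- right convergents
    have hRe : (a - x * c) * (c * r + d) = 1 := by
      linear_combination (-c) * hkey + hdet
    have h1 : a - x * c = 1 / (c * r + d) := by
      field_simp
      linear_combination hRe
    have h2 : 0 < a - x * c := by rw [h1]; positivity
    have h3 : a - x * c ≤ 1 := by
      rw [h1]
      exact (div_le_one hden0).mpr hden
    have e1 : R (iota x) n = x + (a - x * c) / c := by
      show a / c = x + (a - x * c) / c
      field_simp
      ring
    have hRlow : x ≤ R (iota x) n := by
      rw [e1]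
      have : 0 ≤ (a - x * c) / c := div_nonneg h2.le hc0.le
      linarith
    have hRhigh : R (iota x) n ≤ x + 1 / ((n : ℝ) + 1) := by
      rw [e1]
      have : (a - x * c) / c ≤ 1 / ((n : ℝ) + 1) := by
        rw [div_le_div_iff₀ hc0 hnp1]
        nlinarith [mul_le_mul_of_nonneg_right h3 hnp1.le]
      linarith
    -- left convergents
    have hcd0 : (0 : ℝ) < c + d := lt_of_lt_of_le one_pos hcdR
    have hLe : (x * (c + d) - (a + b)) * (c * r + d) = r - 1 := by
      linear_combination (c + d) * hkey + (r - 1) * hdet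
    set u := x * (c + d) - (a + b) with hu'
    have hu : u = (r - 1) / (c * r + d) := by
      rw [eq_div_iff hden0.ne']
      linear_combination hLe
    have hu0 : 0 ≤ u := by
      rw [hu]
      exact div_nonneg (by linarith) hden0.le
    have hu1 : u ≤ 1 / c := by
      rw [hu, div_le_div_iff₀ hden0 hc0]
      nlinarith
    have e2 : L (iota x) n = x - u / (c + d) := by
      show (a + b) / (c + d) = x - u / (c + d)
      field_simp
      linear_combination (c + d) * hu'
    have hLhigh : L (iota x) n ≤ x := by
      rw [e2]
      have : 0 ≤ u / (c + d) := div_nonneg hu0 hcd0.le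
      linarith
    have hLlow : x - 1 / ((n : ℝ) + 1) ≤ L (iota x) n := by
      rw [e2]
      have h4 : u / (c + d) ≤ u := div_le_self hu0 hcdR
      have h5 : (1 : ℝ) / c ≤ 1 / ((n : ℝ) + 1) :=
        one_div_le_one_div_of_le hnp1 hcR
      linarith
    exact ⟨⟨hRlow, hRhigh⟩, ⟨hLlow, hLhigh⟩⟩
  have hlim : Filter.Tendsto (fun n : ℕ => 1 / ((n : ℝ) + 1)) Filter.atTop (nhds 0) :=
    tendsto_one_div_add_atTop_nhds_zero_nat
  constructor
  · refine tendsto_of_tendsto_of_tendsto_of_le_of_le tendsto_const_nhds ?_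
      (fun n => (key n).1.1) (fun n => (key n).1.2)
    have := hlim.const_add x
    simpa using this
  · refine tendsto_of_tendsto_of_tendsto_of_le_of_le ?_ tendsto_const_nhds
      (fun n => (key n).2.1) (fun n => (key n).2.2)
    have := hlim.const_sub x
    simpa using this
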